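/- arXiv:1407.5122 — 3 statements merged into one kernel-verified Lean document; each statement's English description precedes it below -/
import Mathlib

section
/- Let m ≥ 2 and let Δ : [1, 3m-2] → {0,1} be a 2-coloring. If there is no monochromatic m-subset B ⊆ [1, 3m-2] with diam(B) ≥ 2m-2, then there exist monochromatic m-subsets D₁, D₂ ⊆ [1, 3m-2] with max(D₁) < min(D₂) and diam(D₁) = diam(D₂) = m-1. -/
open Finset

/-- diameter of a finite set of naturals: max - min (0 for ∅). -/
def diam (X : Finset ℕ) : ℕ := WithBot.unbotD 0 X.max - WithTop.untopD 0 X.min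

/-- B is monochromatic under Δ. -/
def Mono (Δ : ℕ → Fin 2) (B : Finset ℕ) : Prop := ∃ c, ∀ x ∈ B, Δ x = c

/-- X <_p Y : every element of X precedes every element of Y. -/
def PLt (X Y : Finset ℕ) : Prop := ∀ x ∈ X, ∀ y ∈ Y, x < y

lemma diam_ge {B : Finset ℕ} {x y : ℕ} (hx : x ∈ B) (hy : y ∈ B) :
    y - x ≤ diam B := by
  have hne : B.Nonempty := ⟨x, hx⟩
  unfold diam
  rw [← Finset.coe_max' hne, ← Finset.coe_min' hne]
  simp only [WithBot.unbotD_coe, WithTop.untopD_coe]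
  exact tsub_le_tsub (Finset.le_max' B y hy) (Finset.min'_le B x hx)

lemma diam_Icc {a b : ℕ} (h : a ≤ b) : diam (Finset.Icc a b) = b - a := by
  have hne : (Finset.Icc a b).Nonempty := by rwa [Finset.nonempty_Icc]
  have hmax : (Finset.Icc a b).max' hne = b :=
    le_antisymm (Finset.max'_le _ _ _ (fun x hx => (Finset.mem_Icc.mp hx).2))
      (Finset.le_max' _ _ (Finset.mem_Icc.mpr ⟨h, le_refl b⟩))
  have hmin : (Finset.Icc a b).min' hne = a :=
    le_antisymm (Finset.min'_le _ _ (Finset.mem_Icc.mpr ⟨le_refl a, h⟩))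
      (Finset.le_min' _ _ _ (fun x hx => (Finset.mem_Icc.mp hx).1))
  unfold diam
  rw [← Finset.coe_max' hne, ← Finset.coe_min' hne, hmax, hmin]
  rfl

theorem stmt1 (m : ℕ) (hm : 2 ≤ m) (Δ : ℕ → Fin 2)
    (h : ¬ ∃ B : Finset ℕ, B ⊆ Finset.Icc 1 (3 * m - 2) ∧ B.card = m ∧ Mono Δ B ∧
      2 * m - 2 ≤ diam B) :
    ∃ D₁ D₂ : Finset ℕ, D₁ ⊆ Finset.Icc 1 (3 * m - 2) ∧ D₂ ⊆ Finset.Icc 1 (3 * m - 2) ∧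
      D₁.card = m ∧ D₂.card = m ∧ Mono Δ D₁ ∧ Mono Δ D₂ ∧ PLt D₁ D₂ ∧
      diam D₁ = m - 1 ∧ diam D₂ = m - 1 := by
  set I := Finset.Icc 1 (3 * m - 2) with hIdef
  have hIcard : I.card = 3 * m - 2 := by
    rw [hIdef, Nat.card_Icc]; omega
  -- From any monochromatic subset of I with ≥ m elements, points are < 2m-2 apart
  have hbuild : ∀ (S : Finset ℕ) (c : Fin 2), S ⊆ I → (∀ x ∈ S, Δ x = c) →
      m ≤ S.card → ∀ x ∈ S, ∀ y ∈ S, y - x < 2 * m - 2 := by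
    intro S c hSI hSc hScard x hx y hy
    by_contra hcon
    push_neg at hcon
    have hxy : ({x, y} : Finset ℕ) ⊆ S := by
      intro z hz
      simp only [Finset.mem_insert, Finset.mem_singleton] at hz
      rcases hz with rfl | rfl <;> assumption
    have hc2 : ({x, y} : Finset ℕ).card ≤ m := by
      calc ({x, y} : Finset ℕ).card ≤ 2 := Finset.card_le_two
        _ ≤ m := hm
    obtain ⟨B, hxyB, hBS, hBcard⟩ := Finset.exists_subsuperset_card_eq hxy hc2 hScard
    apply h
    refine ⟨B, hBS.trans hSI, hBcard, ⟨c, fun z hz => hSc z (hBS hz)⟩, ?_⟩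
    have hxB : x ∈ B := hxyB (by simp)
    have hyB : y ∈ B := hxyB (by simp)
    exact hcon.trans (diam_ge hxB hyB)
  -- each color class has at least m elements
  have hcard : ∀ c : Fin 2, m ≤ (I.filter (fun x => Δ x = c)).card := by
    intro c
    by_contra hc
    push_neg at hc
    obtain ⟨c', hc'ne, hc'all⟩ : ∃ c' : Fin 2, c' ≠ c ∧ ∀ a : Fin 2, a ≠ c → a = c' := by
      fin_cases c
      · exact ⟨1, by decide, by decide⟩
      · exact ⟨0, by decide, by decide⟩
    set S' := I.filter (fun x => Δ x = c') with hS'def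
    have hsum : (I.filter (fun x => Δ x = c)).card + (I.filter (fun x => ¬ Δ x = c)).card
        = I.card := Finset.card_filter_add_card_filter_not _
    have hfe : I.filter (fun x => ¬ Δ x = c) = S' := by
      rw [hS'def]
      apply Finset.filter_congr
      intro x _
      constructor
      · exact fun hne => hc'all _ hne
      · intro he; rw [he]; exact hc'ne
    rw [hfe, hIcard] at hsum
    have hS'card : 2 * m - 1 ≤ S'.card := by omega
    have hS'ne : S'.Nonempty := Finset.card_pos.mp (by omega)
    have hmin := S'.min'_le _ (S'.max'_mem hS'ne)
    have hsub : S' ⊆ Finset.Icc (S'.min' hS'ne) (S'.max' hS'ne) := by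
      intro z hz
      exact Finset.mem_Icc.mpr ⟨S'.min'_le z hz, S'.le_max' z hz⟩
    have hle := Finset.card_le_card hsub
    rw [Nat.card_Icc] at hle
    have hdiff : 2 * m - 2 ≤ S'.max' hS'ne - S'.min' hS'ne := by omega
    have := hbuild S' c' (Finset.filter_subset _ _)
      (fun x hx => (Finset.mem_filter.mp hx).2) (by omega)
      (S'.min' hS'ne) (S'.min'_mem hS'ne) (S'.max' hS'ne) (S'.max'_mem hS'ne)
    omega
  have hstep : ∀ x ∈ I, ∀ y ∈ I, Δ x = Δ y → y - x < 2 * m - 2 := by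
    intro x hx y hy hxy
    exact hbuild (I.filter (fun z => Δ z = Δ y)) (Δ y) (Finset.filter_subset _ _)
      (fun z hz => (Finset.mem_filter.mp hz).2) (hcard (Δ y))
      x (Finset.mem_filter.mpr ⟨hx, hxy⟩) y (Finset.mem_filter.mpr ⟨hy, rfl⟩)
  have h1I : (1 : ℕ) ∈ I := Finset.mem_Icc.mpr ⟨le_refl 1, by omega⟩
  have hNI : (3 * m - 2) ∈ I := Finset.mem_Icc.mpr ⟨by omega, le_refl _⟩
  have hne : Δ 1 ≠ Δ (3 * m - 2) := by
    intro heq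
    have := hstep 1 h1I (3 * m - 2) hNI heq
    omega
  have hfin2 : ∀ a b c : Fin 2, b ≠ c → a ≠ b → a = c := by decide
  have hlow : ∀ x ∈ Finset.Icc 1 m, Δ x = Δ 1 := by
    intro x hx
    rw [Finset.mem_Icc] at hx
    by_contra hcon
    have hxc : Δ x = Δ (3 * m - 2) := hfin2 _ _ _ hne hcon
    have hxI : x ∈ I := Finset.mem_Icc.mpr ⟨hx.1, by omega⟩
    have := hstep x hxI (3 * m - 2) hNI (hxc.symm ▸ rfl)
    omega
  have hhigh : ∀ x ∈ Finset.Icc (2 * m - 1) (3 * m - 2), Δ x = Δ (3 * m - 2) := by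
    intro x hx
    rw [Finset.mem_Icc] at hx
    by_contra hcon
    have hxc : Δ x = Δ 1 := hfin2 _ _ _ (Ne.symm hne) hcon
    have hxI : x ∈ I := Finset.mem_Icc.mpr ⟨by omega, hx.2⟩
    have := hstep 1 h1I x hxI hxc.symm
    omega
  refine ⟨Finset.Icc 1 m, Finset.Icc (2 * m - 1) (3 * m - 2), ?_, ?_, ?_, ?_, ?_, ?_, ?_, ?_, ?_⟩
  · intro z hz; rw [Finset.mem_Icc] at hz ⊢; omega
  · intro z hz; rw [Finset.mem_Icc] at hz ⊢; omega
  · rw [Nat.card_Icc]; omega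
  · rw [Nat.card_Icc]; omega
  · exact ⟨Δ 1, hlow⟩
  · exact ⟨Δ (3 * m - 2), hhigh⟩
  · intro x hx y hy
    rw [Finset.mem_Icc] at hx hy
    omega
  · rw [diam_Icc (by omega)]
  · rw [diam_Icc (by omega)]; omega
end

section
/- Let m ≥ 2 and let Δ : [1, 3m-2] → {0,1} be a 2-coloring such that each color class has at least m elements and there is no monochromatic m-subset B with diam(B) ≥ 2m-2. If Δ(1) = 1, then the largest element colored 1 is at most 2m-2, Δ(3m-2) = 0, and the smallest element colored 0 is at least m+1. -/
open Finset

lemma key (m : ℕ) (hm : 2 ≤ m) (Δ : ℕ → Fin 2)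
    (hcolors : ∀ c : Fin 2, m ≤ ((Finset.Icc 1 (3 * m - 2)).filter (fun x => Δ x = c)).card)
    (h : ¬ ∃ B : Finset ℕ, B ⊆ Finset.Icc 1 (3 * m - 2) ∧ B.card = m ∧ Mono Δ B ∧
      2 * m - 2 ≤ diam B)
    (c : Fin 2) (a b : ℕ) (ha : a ∈ Finset.Icc 1 (3 * m - 2))
    (hb : b ∈ Finset.Icc 1 (3 * m - 2)) (hΔa : Δ a = c) (hΔb : Δ b = c)
    (hab : 2 * m - 2 ≤ b - a) : False := by
  set C := (Finset.Icc 1 (3 * m - 2)).filter (fun x => Δ x = c) with hC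
  have hsub : ({a, b} : Finset ℕ) ⊆ C := by
    intro x hx
    simp only [mem_insert, mem_singleton] at hx
    rcases hx with rfl | rfl <;> simp [hC, mem_filter, ha, hb, hΔa, hΔb]
  have hcard2 : ({a, b} : Finset ℕ).card ≤ m := by
    have := Finset.card_insert_le a ({b} : Finset ℕ)
    simp at this; omega
  obtain ⟨B, hsB, hBC, hBcard⟩ := Finset.exists_subsuperset_card_eq hsub hcard2 (hcolors c)
  have haB : a ∈ B := hsB (by simp)
  have hbB : b ∈ B := hsB (by simp)
  have hne : B.Nonempty := ⟨a, haB⟩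
  have hd : diam B = B.max' hne - B.min' hne := by
    unfold diam
    rw [← Finset.coe_max' hne, ← Finset.coe_min' hne]
    rfl
  apply h
  refine ⟨B, hBC.trans (filter_subset _ _), hBcard, ⟨c, fun x hx => (mem_filter.mp (hBC hx)).2⟩, ?_⟩
  have h1 : B.min' hne ≤ a := B.min'_le a haB
  have h2 : b ≤ B.max' hne := B.le_max' b hbB
  omega

theorem stmt2 (m : ℕ) (hm : 2 ≤ m) (Δ : ℕ → Fin 2)
    (hcolors : ∀ c : Fin 2, m ≤ ((Finset.Icc 1 (3 * m - 2)).filter (fun x => Δ x = c)).card)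
    (h : ¬ ∃ B : Finset ℕ, B ⊆ Finset.Icc 1 (3 * m - 2) ∧ B.card = m ∧ Mono Δ B ∧
      2 * m - 2 ≤ diam B)
    (h1 : Δ 1 = 1) :
    (∀ x ∈ Finset.Icc 1 (3 * m - 2), Δ x = 1 → x ≤ 2 * m - 2) ∧
    Δ (3 * m - 2) = 0 ∧
    (∀ x ∈ Finset.Icc 1 (3 * m - 2), Δ x = 0 → m + 1 ≤ x) := by
  have hmem1 : (1 : ℕ) ∈ Finset.Icc 1 (3 * m - 2) := by simp; omega
  have hmemN : (3 * m - 2) ∈ Finset.Icc 1 (3 * m - 2) := by simp; omega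
  have claim1 : ∀ x ∈ Finset.Icc 1 (3 * m - 2), Δ x = 1 → x ≤ 2 * m - 2 := by
    intro x hx hΔx
    by_contra hlt
    exact key m hm Δ hcolors h 1 1 x hmem1 hx h1 hΔx (by omega)
  have h01 : ∀ v : Fin 2, v = 0 ∨ v = 1 := by decide
  have hN : Δ (3 * m - 2) = 0 := by
    rcases h01 (Δ (3 * m - 2)) with hv | hv
    · exact hv
    · have := claim1 (3 * m - 2) hmemN hv
      omega
  refine ⟨claim1, hN, ?_⟩
  intro x hx hΔx
  by_contra hlt
  have hx1 : 1 ≤ x := (mem_Icc.mp hx).1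
  exact key m hm Δ hcolors h 0 x (3 * m - 2) hx hmemN hΔx hN (by omega)
end

section
/- For every integer m ≥ 2, the 2-coloring of [1, 8m-6+⌊(2m-2)/3⌋] given by the string 0 1^{m-1} 0^{m-1} 1^{m-1} 0^{⌊(2m-2)/3⌋} 1^{m-⌊(2m-2)/3⌋-1} 0^{m-1} 1^{2m-1+⌊(2m-2)/3⌋} 0^{m-1} admits no three monochromatic m-subsets B₁ <_p B₂ <_p B₃ with diam(B₁) ≤ diam(B₂) ≤ diam(B₃). Consequently f(m,m,m;2) ≥ 8m-5+⌊(2m-2)/3⌋. -/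
open Finset

/-- There exist three monochromatic m-subsets B₁ <_p B₂ <_p B₃ of [1,N]
with nondecreasing diameters. -/
def HasSol (m N : ℕ) (Δ : ℕ → Fin 2) : Prop :=
  ∃ B₁ B₂ B₃ : Finset ℕ,
    B₁ ⊆ Finset.Icc 1 N ∧ B₂ ⊆ Finset.Icc 1 N ∧ B₃ ⊆ Finset.Icc 1 N ∧
    B₁.card = m ∧ B₂.card = m ∧ B₃.card = m ∧
    Mono Δ B₁ ∧ Mono Δ B₂ ∧ Mono Δ B₃ ∧
    PLt B₁ B₂ ∧ PLt B₂ B₃ ∧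
    diam B₁ ≤ diam B₂ ∧ diam B₂ ≤ diam B₃

/-- f(m,m,m;2): the least N such that every 2-coloring of [1,N] has a solution. -/
noncomputable def f3 (m : ℕ) : ℕ := sInf {N | ∀ Δ : ℕ → Fin 2, HasSol m N Δ}

def LD0 (m j a b : ℕ) : Prop :=
      ((1) ≤ a ∧ a ≤ (1) ∧ (m+1) ≤ b ∧ b ≤ (2*m-1) ∧ (m ≤ ((1) + 1 - a) + (b + 1 - (m+1)))) ∨
      ((1) ≤ a ∧ a ≤ (1) ∧ (3*m-1) ≤ b ∧ b ≤ (3*m-2+j) ∧ (m ≤ ((1) + 1 - a) + (m-1) + (b + 1 - (3*m-1)))) ∨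
      ((1) ≤ a ∧ a ≤ (1) ∧ (4*m-2) ≤ b ∧ b ≤ (5*m-4) ∧ (m ≤ ((1) + 1 - a) + (m-1 + j) + (b + 1 - (4*m-2)))) ∨
      ((1) ≤ a ∧ a ≤ (1) ∧ (7*m-4+j) ≤ b ∧ b ≤ (8*m-6+j) ∧ (m ≤ ((1) + 1 - a) + (m-1 + j + m-1) + (b + 1 - (7*m-4+j)))) ∨
      ((m+1) ≤ a ∧ a ≤ (2*m-1) ∧ (3*m-1) ≤ b ∧ b ≤ (3*m-2+j) ∧ (m ≤ ((2*m-1) + 1 - a) + (b + 1 - (3*m-1)))) ∨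
      ((m+1) ≤ a ∧ a ≤ (2*m-1) ∧ (4*m-2) ≤ b ∧ b ≤ (5*m-4) ∧ (m ≤ ((2*m-1) + 1 - a) + (j) + (b + 1 - (4*m-2)))) ∨
      ((m+1) ≤ a ∧ a ≤ (2*m-1) ∧ (7*m-4+j) ≤ b ∧ b ≤ (8*m-6+j) ∧ (m ≤ ((2*m-1) + 1 - a) + (j + m-1) + (b + 1 - (7*m-4+j)))) ∨
      ((3*m-1) ≤ a ∧ a ≤ (3*m-2+j) ∧ (4*m-2) ≤ b ∧ b ≤ (5*m-4) ∧ (m ≤ ((3*m-2+j) + 1 - a) + (b + 1 - (4*m-2)))) ∨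
      ((3*m-1) ≤ a ∧ a ≤ (3*m-2+j) ∧ (7*m-4+j) ≤ b ∧ b ≤ (8*m-6+j) ∧ (m ≤ ((3*m-2+j) + 1 - a) + (m-1) + (b + 1 - (7*m-4+j)))) ∨
      ((4*m-2) ≤ a ∧ a ≤ (5*m-4) ∧ (7*m-4+j) ≤ b ∧ b ≤ (8*m-6+j) ∧ (m ≤ ((5*m-4) + 1 - a) + (b + 1 - (7*m-4+j))))

def LD1 (m j a b : ℕ) : Prop :=
      ((2) ≤ a ∧ a ≤ (m) ∧ (2*m) ≤ b ∧ b ≤ (3*m-2) ∧ (m ≤ ((m) + 1 - a) + (b + 1 - (2*m)))) ∨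
      ((2) ≤ a ∧ a ≤ (m) ∧ (3*m-1+j) ≤ b ∧ b ≤ (4*m-3) ∧ (m ≤ ((m) + 1 - a) + (m-1) + (b + 1 - (3*m-1+j)))) ∨
      ((2) ≤ a ∧ a ≤ (m) ∧ (5*m-3) ≤ b ∧ b ≤ (7*m-5+j) ∧ (m ≤ ((m) + 1 - a) + (m-1 + m-1-j) + (b + 1 - (5*m-3)))) ∨
      ((2*m) ≤ a ∧ a ≤ (3*m-2) ∧ (3*m-1+j) ≤ b ∧ b ≤ (4*m-3) ∧ (m ≤ ((3*m-2) + 1 - a) + (b + 1 - (3*m-1+j)))) ∨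
      ((2*m) ≤ a ∧ a ≤ (3*m-2) ∧ (5*m-3) ≤ b ∧ b ≤ (7*m-5+j) ∧ (m ≤ ((3*m-2) + 1 - a) + (m-1-j) + (b + 1 - (5*m-3)))) ∨
      ((3*m-1+j) ≤ a ∧ a ≤ (4*m-3) ∧ (5*m-3) ≤ b ∧ b ≤ (7*m-5+j) ∧ (m ≤ ((4*m-3) + 1 - a) + (b + 1 - (5*m-3)))) ∨
      ((5*m-3) ≤ a ∧ a ≤ (7*m-5+j) ∧ (5*m-3) ≤ b ∧ b ≤ (7*m-5+j) ∧ (m ≤ b + 1 - a))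

set_option maxHeartbeats 4000000 in
lemma loc0 (m j a b : ℕ) (hm : 2 ≤ m) (hj : 3*j ≤ 2*m-2 ∧ 2*m-2 ≤ 3*j+2)
    (hab : a ≤ b) (h1a : 1 ≤ a)
    (hA : ((1) ≤ a ∧ a ≤ (1)) ∨ ((m+1) ≤ a ∧ a ≤ (2*m-1)) ∨ ((3*m-1) ≤ a ∧ a ≤ (3*m-2+j)) ∨ ((4*m-2) ≤ a ∧ a ≤ (5*m-4)) ∨ ((7*m-4+j) ≤ a ∧ a ≤ (8*m-6+j)))
    (hB : ((1) ≤ b ∧ b ≤ (1)) ∨ ((m+1) ≤ b ∧ b ≤ (2*m-1)) ∨ ((3*m-1) ≤ b ∧ b ≤ (3*m-2+j)) ∨ ((4*m-2) ≤ b ∧ b ≤ (5*m-4)) ∨ ((7*m-4+j) ≤ b ∧ b ≤ (8*m-6+j)))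
    (hcnt : m ≤ (min b 1 + 1 - a) + (min b (2*m-1) + 1 - max a (m+1)) + (min b (3*m-2+j) + 1 - max a (3*m-1)) + (min b (5*m-4) + 1 - max a (4*m-2)) + (b + 1 - max a (7*m-4+j))) : LD0 m j a b := by
  unfold LD0
  rcases hA with h|h|h|h|h <;> rcases hB with h2|h2|h2|h2|h2
  · exfalso; omega
  · exact Or.inl (⟨h.1, h.2, h2.1, h2.2, by omega⟩)
  · exact Or.inr (Or.inl (⟨h.1, h.2, h2.1, h2.2, by omega⟩))
  · exact Or.inr (Or.inr (Or.inl (⟨h.1, h.2, h2.1, h2.2, by omega⟩)))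
  · exact Or.inr (Or.inr (Or.inr (Or.inl (⟨h.1, h.2, h2.1, h2.2, by omega⟩))))
  · exact absurd hab (by clear hcnt; omega)
  · exfalso; omega
  · exact Or.inr (Or.inr (Or.inr (Or.inr (Or.inl (⟨h.1, h.2, h2.1, h2.2, by omega⟩)))))
  · exact Or.inr (Or.inr (Or.inr (Or.inr (Or.inr (Or.inl (⟨h.1, h.2, h2.1, h2.2, by omega⟩))))))
  · exact Or.inr (Or.inr (Or.inr (Or.inr (Or.inr (Or.inr (Or.inl (⟨h.1, h.2, h2.1, h2.2, by omega⟩)))))))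
  · exact absurd hab (by clear hcnt; omega)
  · exact absurd hab (by clear hcnt; omega)
  · exfalso; omega
  · exact Or.inr (Or.inr (Or.inr (Or.inr (Or.inr (Or.inr (Or.inr (Or.inl (⟨h.1, h.2, h2.1, h2.2, by omega⟩))))))))
  · exact Or.inr (Or.inr (Or.inr (Or.inr (Or.inr (Or.inr (Or.inr (Or.inr (Or.inl (⟨h.1, h.2, h2.1, h2.2, by omega⟩)))))))))
  · exact absurd hab (by clear hcnt; omega)
  · exact absurd hab (by clear hcnt; omega)
  · exact absurd hab (by clear hcnt; omega)
  · exfalso; omega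
  · exact Or.inr (Or.inr (Or.inr (Or.inr (Or.inr (Or.inr (Or.inr (Or.inr (Or.inr (⟨h.1, h.2, h2.1, h2.2, by omega⟩)))))))))
  · exact absurd hab (by clear hcnt; omega)
  · exact absurd hab (by clear hcnt; omega)
  · exact absurd hab (by clear hcnt; omega)
  · exact absurd hab (by clear hcnt; omega)
  · exfalso; omega

set_option maxHeartbeats 4000000 in
lemma loc1 (m j a b : ℕ) (hm : 2 ≤ m) (hj : 3*j ≤ 2*m-2 ∧ 2*m-2 ≤ 3*j+2)
    (hab : a ≤ b) (h1a : 1 ≤ a)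
    (hA : ((2) ≤ a ∧ a ≤ (m)) ∨ ((2*m) ≤ a ∧ a ≤ (3*m-2)) ∨ ((3*m-1+j) ≤ a ∧ a ≤ (4*m-3)) ∨ ((5*m-3) ≤ a ∧ a ≤ (7*m-5+j)))
    (hB : ((2) ≤ b ∧ b ≤ (m)) ∨ ((2*m) ≤ b ∧ b ≤ (3*m-2)) ∨ ((3*m-1+j) ≤ b ∧ b ≤ (4*m-3)) ∨ ((5*m-3) ≤ b ∧ b ≤ (7*m-5+j)))
    (hcnt : m ≤ (min b m + 1 - max a 2) + (min b (3*m-2) + 1 - max a (2*m)) + (min b (4*m-3) + 1 - max a (3*m-1+j)) + (min b (7*m-5+j) + 1 - max a (5*m-3))) : LD1 m j a b := by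
  unfold LD1
  rcases hA with h|h|h|h <;> rcases hB with h2|h2|h2|h2
  · exfalso; omega
  · exact Or.inl (⟨h.1, h.2, h2.1, h2.2, by omega⟩)
  · exact Or.inr (Or.inl (⟨h.1, h.2, h2.1, h2.2, by omega⟩))
  · exact Or.inr (Or.inr (Or.inl (⟨h.1, h.2, h2.1, h2.2, by omega⟩)))
  · exact absurd hab (by clear hcnt; omega)
  · exfalso; omega
  · exact Or.inr (Or.inr (Or.inr (Or.inl (⟨h.1, h.2, h2.1, h2.2, by omega⟩))))
  · exact Or.inr (Or.inr (Or.inr (Or.inr (Or.inl (⟨h.1, h.2, h2.1, h2.2, by omega⟩)))))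
  · exact absurd hab (by clear hcnt; omega)
  · exact absurd hab (by clear hcnt; omega)
  · exfalso; omega
  · exact Or.inr (Or.inr (Or.inr (Or.inr (Or.inr (Or.inl (⟨h.1, h.2, h2.1, h2.2, by omega⟩))))))
  · exact absurd hab (by clear hcnt; omega)
  · exact absurd hab (by clear hcnt; omega)
  · exact absurd hab (by clear hcnt; omega)
  · exact Or.inr (Or.inr (Or.inr (Or.inr (Or.inr (Or.inr (⟨h.1, h.2, h2.1, h2.2, by omega⟩))))))

set_option maxHeartbeats 8000000 in
lemma combine (m j a1 b1 a2 b2 a3 b3 : ℕ) (hm : 2 ≤ m)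
    (hj : 3*j ≤ 2*m-2 ∧ 2*m-2 ≤ 3*j+2)
    (ord : 1 ≤ a1 ∧ a1 ≤ b1 ∧ b1 < a2 ∧ a2 ≤ b2 ∧ b2 < a3 ∧ a3 ≤ b3 ∧ b3 ≤ 8*m-6+j)
    (hd : b1 - a1 ≤ b2 - a2 ∧ b2 - a2 ≤ b3 - a3)
    (h1 : LD0 m j a1 b1 ∨ LD1 m j a1 b1)
    (h2 : LD0 m j a2 b2 ∨ LD1 m j a2 b2)
    (h3 : LD0 m j a3 b3 ∨ LD1 m j a3 b3) : False := by
  unfold LD0 LD1 at h1 h2 h3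
  omega


open Finset

/-- the coloring -/
def col (m : ℕ) (x : ℕ) : Fin 2 :=
  if x ≤ 1 then 0
  else if x ≤ m then 1
  else if x ≤ 2 * m - 1 then 0
  else if x ≤ 3 * m - 2 then 1
  else if x ≤ 3 * m - 2 + (2 * m - 2) / 3 then 0
  else if x ≤ 4 * m - 3 then 1
  else if x ≤ 5 * m - 4 then 0
  else if x ≤ 7 * m - 5 + (2 * m - 2) / 3 then 1
  else 0

lemma col_zero {m x : ℕ} (hm : 2 ≤ m) (hx : 1 ≤ x) (hx2 : x ≤ 8*m-6+(2*m-2)/3)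
    (h : col m x = 0) :
    ((1 ≤ x ∧ x ≤ 1) ∨ (m+1 ≤ x ∧ x ≤ 2*m-1) ∨ (3*m-1 ≤ x ∧ x ≤ 3*m-2+(2*m-2)/3)
      ∨ (4*m-2 ≤ x ∧ x ≤ 5*m-4) ∨ (7*m-4+(2*m-2)/3 ≤ x ∧ x ≤ 8*m-6+(2*m-2)/3)) := by
  unfold col at h
  split_ifs at h <;> first | exact absurd h (by decide) | omega

lemma col_one {m x : ℕ} (hm : 2 ≤ m) (h : col m x = 1) :
    ((2 ≤ x ∧ x ≤ m) ∨ (2*m ≤ x ∧ x ≤ 3*m-2) ∨ (3*m-1+(2*m-2)/3 ≤ x ∧ x ≤ 4*m-3)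
      ∨ (5*m-3 ≤ x ∧ x ≤ 7*m-5+(2*m-2)/3)) := by
  unfold col at h
  split_ifs at h <;> first | exact absurd h (by decide) | omega

lemma cnt0 {m : ℕ} (hm : 2 ≤ m) (a b : ℕ) (ha : 1 ≤ a) (hb : b ≤ 8*m-6+(2*m-2)/3) :
    ((Finset.Icc a b).filter (fun x => col m x = 0)).card ≤
      (min b 1 + 1 - a) + (min b (2*m-1) + 1 - max a (m+1))
      + (min b (3*m-2+(2*m-2)/3) + 1 - max a (3*m-1))
      + (min b (5*m-4) + 1 - max a (4*m-2)) + (b + 1 - max a (7*m-4+(2*m-2)/3)) := by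
  have hsub : ((Finset.Icc a b).filter (fun x => col m x = 0)) ⊆
      (Finset.Icc (max a 1) (min b 1)) ∪ (Finset.Icc (max a (m+1)) (min b (2*m-1)))
      ∪ (Finset.Icc (max a (3*m-1)) (min b (3*m-2+(2*m-2)/3)))
      ∪ (Finset.Icc (max a (4*m-2)) (min b (5*m-4)))
      ∪ (Finset.Icc (max a (7*m-4+(2*m-2)/3)) b) := by
    intro x hx
    simp only [Finset.mem_filter, Finset.mem_Icc] at hx
    obtain ⟨⟨h1, h2⟩, h3⟩ := hx
    have := col_zero hm (le_trans ha h1) (le_trans h2 hb) h3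
    simp only [Finset.mem_union, Finset.mem_Icc]
    omega
  refine (Finset.card_le_card hsub).trans ?_
  refine le_trans (Finset.card_union_le _ _) ?_
  refine le_trans (add_le_add_left (Finset.card_union_le _ _) _) ?_
  refine le_trans (add_le_add_left (add_le_add_left (Finset.card_union_le _ _) _) _) ?_
  refine le_trans (add_le_add_left (add_le_add_left (add_le_add_left
    (Finset.card_union_le _ _) _) _) _) ?_
  simp only [Nat.card_Icc]
  omega

lemma cnt1 {m : ℕ} (hm : 2 ≤ m) (a b : ℕ) (ha : 1 ≤ a) :
    ((Finset.Icc a b).filter (fun x => col m x = 1)).card ≤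
      (min b m + 1 - max a 2) + (min b (3*m-2) + 1 - max a (2*m))
      + (min b (4*m-3) + 1 - max a (3*m-1+(2*m-2)/3))
      + (min b (7*m-5+(2*m-2)/3) + 1 - max a (5*m-3)) := by
  have hsub : ((Finset.Icc a b).filter (fun x => col m x = 1)) ⊆
      (Finset.Icc (max a 2) (min b m)) ∪ (Finset.Icc (max a (2*m)) (min b (3*m-2)))
      ∪ (Finset.Icc (max a (3*m-1+(2*m-2)/3)) (min b (4*m-3)))
      ∪ (Finset.Icc (max a (5*m-3)) (min b (7*m-5+(2*m-2)/3))) := by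
    intro x hx
    simp only [Finset.mem_filter, Finset.mem_Icc] at hx
    obtain ⟨⟨h1, h2⟩, h3⟩ := hx
    have := col_one hm h3
    simp only [Finset.mem_union, Finset.mem_Icc]
    omega
  refine (Finset.card_le_card hsub).trans ?_
  refine le_trans (Finset.card_union_le _ _) ?_
  refine le_trans (add_le_add_left (Finset.card_union_le _ _) _) ?_
  refine le_trans (add_le_add_left (add_le_add_left (Finset.card_union_le _ _) _) _) ?_
  simp only [Nat.card_Icc]
  omega

lemma diam_eq (B : Finset ℕ) (h : B.Nonempty) : diam B = B.max' h - B.min' h := by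
  unfold diam
  rw [← Finset.coe_max' h, ← Finset.coe_min' h]
  rfl

lemma no_sol (m : ℕ) (hm : 2 ≤ m) : ¬ HasSol m (8*m-6+(2*m-2)/3) (col m) := by
  rintro ⟨B1, B2, B3, hB1, hB2, hB3, hk1, hk2, hk3, ⟨c1, hm1⟩, ⟨c2, hm2⟩, ⟨c3, hm3⟩,
    hp12, hp23, hd1, hd2⟩
  have hne1 : B1.Nonempty := Finset.card_pos.mp (by omega)
  have hne2 : B2.Nonempty := Finset.card_pos.mp (by omega)
  have hne3 : B3.Nonempty := Finset.card_pos.mp (by omega)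
  set j := (2*m-2)/3 with hjdef
  have hj : 3*j ≤ 2*m-2 ∧ 2*m-2 ≤ 3*j+2 := by omega
  set a1 := B1.min' hne1; set b1 := B1.max' hne1
  set a2 := B2.min' hne2; set b2 := B2.max' hne2
  set a3 := B3.min' hne3; set b3 := B3.max' hne3
  have hab1 : a1 ≤ b1 := Finset.min'_le _ _ (B1.max'_mem hne1)
  have hab2 : a2 ≤ b2 := Finset.min'_le _ _ (B2.max'_mem hne2)
  have hab3 : a3 ≤ b3 := Finset.min'_le _ _ (B3.max'_mem hne3)
  have h1a1 : 1 ≤ a1 := (Finset.mem_Icc.mp (hB1 (B1.min'_mem hne1))).1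
  have h1a2 : 1 ≤ a2 := (Finset.mem_Icc.mp (hB2 (B2.min'_mem hne2))).1
  have h1a3 : 1 ≤ a3 := (Finset.mem_Icc.mp (hB3 (B3.min'_mem hne3))).1
  have hb1N : b1 ≤ 8*m-6+j := (Finset.mem_Icc.mp (hB1 (B1.max'_mem hne1))).2
  have hb2N : b2 ≤ 8*m-6+j := (Finset.mem_Icc.mp (hB2 (B2.max'_mem hne2))).2
  have hb3N : b3 ≤ 8*m-6+j := (Finset.mem_Icc.mp (hB3 (B3.max'_mem hne3))).2
  have h12 : b1 < a2 := hp12 _ (B1.max'_mem hne1) _ (B2.min'_mem hne2)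
  have h23 : b2 < a3 := hp23 _ (B2.max'_mem hne2) _ (B3.min'_mem hne3)
  rw [diam_eq B1 hne1, diam_eq B2 hne2] at hd1
  rw [diam_eq B2 hne2, diam_eq B3 hne3] at hd2
  have hcnt : ∀ (B : Finset ℕ) (hne : B.Nonempty) (c : Fin 2), B.card = m →
      (∀ x ∈ B, col m x = c) →
      m ≤ ((Finset.Icc (B.min' hne) (B.max' hne)).filter (fun x => col m x = c)).card := by
    intro B hne c hcard hcol
    calc m = B.card := hcard.symm
    _ ≤ _ := by
      apply Finset.card_le_card
      intro x hx
      simp only [Finset.mem_filter, Finset.mem_Icc]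
      exact ⟨⟨Finset.min'_le _ _ hx, Finset.le_max' _ _ hx⟩, hcol x hx⟩
  have hfin : ∀ c : Fin 2, c = 0 ∨ c = 1 := by decide
  have summary : ∀ (B : Finset ℕ) (hne : B.Nonempty) (c : Fin 2), B.card = m →
      (∀ x ∈ B, col m x = c) → 1 ≤ B.min' hne → B.max' hne ≤ 8*m-6+j →
      (LD0 m j (B.min' hne) (B.max' hne)) ∨ (LD1 m j (B.min' hne) (B.max' hne)) := by
    intro B hne c hcard hcol h1a hbN
    have hab : B.min' hne ≤ B.max' hne := Finset.min'_le _ _ (B.max'_mem hne)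
    have hcnt' := hcnt B hne c hcard hcol
    rcases hfin c with rfl | rfl
    · left
      exact loc0 m j _ _ hm hj hab h1a
        (col_zero hm h1a (le_trans hab hbN) (hcol _ (B.min'_mem hne)))
        (col_zero hm (le_trans h1a hab) hbN (hcol _ (B.max'_mem hne)))
        (le_trans hcnt' (cnt0 hm _ _ h1a hbN))
    · right
      exact loc1 m j _ _ hm hj hab h1a
        (col_one hm (hcol _ (B.min'_mem hne)))
        (col_one hm (hcol _ (B.max'_mem hne)))
        (le_trans hcnt' (cnt1 hm _ _ h1a))
  exact combine m j a1 b1 a2 b2 a3 b3 hm hj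
    ⟨h1a1, hab1, h12, hab2, h23, hab3, hb3N⟩ ⟨hd1, hd2⟩
    (summary B1 hne1 c1 hk1 hm1 h1a1 hb1N)
    (summary B2 hne2 c2 hk2 hm2 h1a2 hb2N)
    (summary B3 hne3 c3 hk3 hm3 h1a3 hb3N)

lemma card_le_diam (B : Finset ℕ) (hne : B.Nonempty) : B.card ≤ diam B + 1 := by
  rw [diam_eq B hne]
  have hsub : B ⊆ Finset.Icc (B.min' hne) (B.max' hne) := by
    intro x hx
    exact Finset.mem_Icc.mpr ⟨Finset.min'_le _ _ hx, Finset.le_max' _ _ hx⟩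
  have := Finset.card_le_card hsub
  rw [Nat.card_Icc] at this
  omega

lemma extract (T : Finset ℕ) (m : ℕ) (hm : 2 ≤ m) (hT : m ≤ T.card) :
    ∃ B : Finset ℕ, B ⊆ T ∧ B.card = m ∧ diam B = diam T := by
  have hne : T.Nonempty := Finset.card_pos.mp (by omega)
  set u := T.min' hne with hu
  set v := T.max' hne with hv
  have huv : u < v := Finset.min'_lt_max'_of_card T (by omega)
  have hvmem : v ∈ T.erase u := Finset.mem_erase.mpr ⟨Nat.ne_of_gt huv, T.max'_mem hne⟩
  have hScard : ((T.erase u).erase v).card = T.card - 2 := by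
    rw [Finset.card_erase_of_mem hvmem, Finset.card_erase_of_mem (T.min'_mem hne)]
    omega
  obtain ⟨S', hS'sub, hS'card⟩ := Finset.exists_subset_card_eq
    (show m - 2 ≤ ((T.erase u).erase v).card by omega)
  have huS' : u ∉ S' := fun h => (Finset.mem_erase.mp (Finset.mem_of_mem_erase (hS'sub h))).1 rfl
  have hvS' : v ∉ S' := fun h => (Finset.mem_erase.mp (hS'sub h)).1 rfl
  refine ⟨insert u (insert v S'), ?_, ?_, ?_⟩
  · intro x hx
    rcases Finset.mem_insert.mp hx with rfl | hx
    · exact T.min'_mem hne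
    rcases Finset.mem_insert.mp hx with rfl | hx
    · exact T.max'_mem hne
    · exact Finset.mem_of_mem_erase (Finset.mem_of_mem_erase (hS'sub hx))
  · rw [Finset.card_insert_of_notMem, Finset.card_insert_of_notMem hvS', hS'card]
    · omega
    · simp only [Finset.mem_insert]
      push_neg
      exact ⟨Nat.ne_of_lt huv, huS'⟩
  · have hBsub : insert u (insert v S') ⊆ T := by
      intro x hx
      rcases Finset.mem_insert.mp hx with rfl | hx
      · exact T.min'_mem hne
      rcases Finset.mem_insert.mp hx with rfl | hx
      · exact T.max'_mem hne
      · exact Finset.mem_of_mem_erase (Finset.mem_of_mem_erase (hS'sub hx))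
    have hBne : (insert u (insert v S')).Nonempty := Finset.insert_nonempty _ _
    rw [diam_eq _ hBne, diam_eq T hne]
    have hmin : (insert u (insert v S')).min' hBne = u := by
      apply le_antisymm
      · exact Finset.min'_le _ _ (Finset.mem_insert_self _ _)
      · exact Finset.le_min' _ _ _ fun y hy => Finset.min'_le T y (hBsub hy)
    have hmax : (insert u (insert v S')).max' hBne = v := by
      apply le_antisymm
      · exact Finset.max'_le _ _ _ fun y hy => Finset.le_max' T y (hBsub hy)
      · exact Finset.le_max' _ _ (Finset.mem_insert.mpr (Or.inr (Finset.mem_insert_self _ _)))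
    rw [hmin, hmax]

lemma pigeon (Δ : ℕ → Fin 2) (s : Finset ℕ) (k : ℕ) (h : 2*k ≤ s.card + 1) :
    ∃ c, k ≤ (s.filter (fun x => Δ x = c)).card := by
  by_contra hcon
  push_neg at hcon
  have h0 := hcon 0
  have h1 := hcon 1
  have key : s.filter (fun x => Δ x = 1) = s.filter (fun x => ¬ (Δ x = 0)) := by
    apply Finset.filter_congr
    intro x _
    have two : ∀ c : Fin 2, c = 0 ∨ c = 1 := by decide
    rcases two (Δ x) with hx | hx <;> simp [hx]
  have hsum := Finset.card_filter_add_card_filter_not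
    (s := s) (p := fun x => Δ x = 0)
  rw [← key] at hsum
  omega

lemma hasSol_upper (m : ℕ) (hm : 2 ≤ m) (Δ : ℕ → Fin 2) : HasSol m (14*m-10) Δ := by
  obtain ⟨c1, hc1⟩ := pigeon Δ (Finset.Icc 1 (2*m-1)) m (by rw [Nat.card_Icc]; omega)
  obtain ⟨B1, hB1sub, hB1card⟩ := Finset.exists_subset_card_eq hc1
  obtain ⟨c2, hc2⟩ := pigeon Δ (Finset.Icc (2*m) (6*m-4)) (2*m-1) (by rw [Nat.card_Icc]; omega)
  obtain ⟨B2, hB2sub, hB2card, hB2diam⟩ :=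
    extract ((Finset.Icc (2*m) (6*m-4)).filter (fun x => Δ x = c2)) m hm (by omega)
  obtain ⟨c3, hc3⟩ := pigeon Δ (Finset.Icc (6*m-3) (14*m-10)) (4*m-3) (by rw [Nat.card_Icc]; omega)
  obtain ⟨B3, hB3sub, hB3card, hB3diam⟩ :=
    extract ((Finset.Icc (6*m-3) (14*m-10)).filter (fun x => Δ x = c3)) m hm (by omega)
  have hB1I : ∀ x ∈ B1, 1 ≤ x ∧ x ≤ 2*m-1 := fun x hx =>
    Finset.mem_Icc.mp (Finset.mem_of_mem_filter x (hB1sub hx))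
  have hB2I : ∀ x ∈ B2, 2*m ≤ x ∧ x ≤ 6*m-4 := fun x hx =>
    Finset.mem_Icc.mp (Finset.mem_of_mem_filter x (hB2sub hx))
  have hB3I : ∀ x ∈ B3, 6*m-3 ≤ x ∧ x ≤ 14*m-10 := fun x hx =>
    Finset.mem_Icc.mp (Finset.mem_of_mem_filter x (hB3sub hx))
  have hne1 : B1.Nonempty := Finset.card_pos.mp (by omega)
  have hne2 : B2.Nonempty := Finset.card_pos.mp (by omega)
  have hne3 : B3.Nonempty := Finset.card_pos.mp (by omega)
  -- diameter bounds
  have hd1 : diam B1 ≤ 2*m-2 := by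
    rw [diam_eq B1 hne1]
    have h1 := hB1I _ (B1.max'_mem hne1)
    have h2 := hB1I _ (B1.min'_mem hne1)
    omega
  have hd2low : 2*m-2 ≤ diam B2 := by
    have := card_le_diam ((Finset.Icc (2*m) (6*m-4)).filter (fun x => Δ x = c2))
      (Finset.card_pos.mp (by omega))
    omega
  have hd2up : diam B2 ≤ 4*m-4 := by
    have hT2ne : ((Finset.Icc (2*m) (6*m-4)).filter (fun x => Δ x = c2)).Nonempty :=
      Finset.card_pos.mp (by omega)
    rw [hB2diam, diam_eq _ hT2ne]
    have h1 := Finset.mem_Icc.mp (Finset.mem_of_mem_filter _ (Finset.max'_mem _ hT2ne))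
    have h2 := Finset.mem_Icc.mp (Finset.mem_of_mem_filter _ (Finset.min'_mem _ hT2ne))
    omega
  have hd3low : 4*m-4 ≤ diam B3 := by
    have := card_le_diam ((Finset.Icc (6*m-3) (14*m-10)).filter (fun x => Δ x = c3))
      (Finset.card_pos.mp (by omega))
    omega
  refine ⟨B1, B2, B3, ?_, ?_, ?_, hB1card, hB2card, hB3card,
    ⟨c1, fun x hx => (Finset.mem_filter.mp (hB1sub hx)).2⟩,
    ⟨c2, fun x hx => (Finset.mem_filter.mp (hB2sub hx)).2⟩,
    ⟨c3, fun x hx => (Finset.mem_filter.mp (hB3sub hx)).2⟩,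
    ?_, ?_, by omega, by omega⟩
  · intro x hx
    have := hB1I x hx
    exact Finset.mem_Icc.mpr ⟨this.1, by omega⟩
  · intro x hx
    have := hB2I x hx
    exact Finset.mem_Icc.mpr ⟨by omega, by omega⟩
  · intro x hx
    have := hB3I x hx
    exact Finset.mem_Icc.mpr ⟨by omega, this.2⟩
  · intro x hx y hy
    have := hB1I x hx
    have := hB2I y hy
    omega
  · intro x hx y hy
    have := hB2I x hx
    have := hB3I y hy
    omega

theorem stmt4 (m : ℕ) (hm : 2 ≤ m) :
    ¬ HasSol m (8 * m - 6 + (2 * m - 2) / 3)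
      (fun x =>
        if x ≤ 1 then 0
        else if x ≤ m then 1
        else if x ≤ 2 * m - 1 then 0
        else if x ≤ 3 * m - 2 then 1
        else if x ≤ 3 * m - 2 + (2 * m - 2) / 3 then 0
        else if x ≤ 4 * m - 3 then 1
        else if x ≤ 5 * m - 4 then 0
        else if x ≤ 7 * m - 5 + (2 * m - 2) / 3 then 1
        else 0) ∧
    8 * m - 5 + (2 * m - 2) / 3 ≤ f3 m := by
  have hcol : (fun x =>
        if x ≤ 1 then (0 : Fin 2)
        else if x ≤ m then 1
        else if x ≤ 2 * m - 1 then 0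
        else if x ≤ 3 * m - 2 then 1
        else if x ≤ 3 * m - 2 + (2 * m - 2) / 3 then 0
        else if x ≤ 4 * m - 3 then 1
        else if x ≤ 5 * m - 4 then 0
        else if x ≤ 7 * m - 5 + (2 * m - 2) / 3 then 1
        else 0) = col m := rfl
  rw [hcol]
  refine ⟨no_sol m hm, ?_⟩
  unfold f3
  refine le_csInf ⟨14*m-10, ?_⟩ ?_
  · exact fun Δ => hasSol_upper m hm Δ
  intro N hN
  by_contra hlt
  push_neg at hlt
  apply no_sol m hm
  obtain ⟨B1, B2, B3, h1, h2, h3, rest⟩ := hN (col m)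
  have hmono : Finset.Icc 1 N ⊆ Finset.Icc 1 (8*m-6+(2*m-2)/3) :=
    Finset.Icc_subset_Icc le_rfl (by omega)
  exact ⟨B1, B2, B3, h1.trans hmono, h2.trans hmono, h3.trans hmono, rest⟩
end
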